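/- Let g : ℝ^d → ℝ be a differentiable function that is 1-smooth (∇g is 1-Lipschitz) and μ-strongly convex with 0 ≤ μ < 1. Then for all points a, b, the co-coercivity quantity C_g(a,b) := g(a) - g(b) - ⟨∇g(b), a - b⟩ - (μ/2)‖a-b‖² - (1/(2(1-μ)))‖∇g(a) - ∇g(b) - μ(a-b)‖² is non-negative. -/

import Mathlib

open scoped RealInnerProductSpace
open Set

section Aux
variable {F : Type*} [NormedAddCommGroup F] [InnerProductSpace ℝ F] [CompleteSpace F]

lemma line_hasDerivAt {f : F → ℝ} {f' : F → F} (hf : ∀ x, HasGradientAt f (f' x) x)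
    (x y : F) (t : ℝ) :
    HasDerivAt (fun t : ℝ => f (x + t • (y - x))) ⟪f' (x + t • (y - x)), y - x⟫ t := by
  have hline : HasDerivAt (fun t : ℝ => x + t • (y - x)) (y - x) t := by
    simpa using ((hasDerivAt_id t).smul_const (y - x)).const_add x
  have h1 : HasFDerivAt f (InnerProductSpace.toDual ℝ F (f' (x + t • (y - x))))
      (x + t • (y - x)) := hf _
  have h2 := h1.comp_hasDerivAt t hline
  simp at h2
  exact h2

lemma convex_first_order {f : F → ℝ} {f' : F → F} (hf : ∀ x, HasGradientAt f (f' x) x)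
    (hconv : ConvexOn ℝ Set.univ f) (x y : F) :
    f x + ⟪f' x, y - x⟫ ≤ f y := by
  have hφ : ConvexOn ℝ Set.univ (fun t : ℝ => f (x + t • (y - x))) := by
    have h := hconv.comp_affineMap (AffineMap.lineMap x y)
    simp only [Set.preimage_univ] at h
    have he : (fun t : ℝ => f (x + t • (y - x))) = f ∘ (AffineMap.lineMap x y) := by
      funext t
      simp [Function.comp, AffineMap.lineMap_apply_module', add_comm]
    rw [he]
    exact h
  have hd := line_hasDerivAt hf x y 0
  have hs := hφ.le_slope_of_hasDerivAt (mem_univ (0:ℝ)) (mem_univ (1:ℝ)) one_pos (by simpa using hd)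
  rw [slope_def_field] at hs
  simp at hs
  linarith [hs]

lemma mono_first_order {f : F → ℝ} {f' : F → F} (hf : ∀ x, HasGradientAt f (f' x) x)
    (hmono : ∀ a b, 0 ≤ ⟪f' a - f' b, a - b⟫) (x y : F) :
    f x + ⟪f' x, y - x⟫ ≤ f y := by
  have hcont : ContinuousOn (fun t : ℝ => f (x + t • (y - x))) (Set.Icc 0 1) :=
    fun t _ => ((line_hasDerivAt hf x y t).continuousAt).continuousWithinAt
  obtain ⟨c, hc, hceq⟩ := exists_hasDerivAt_eq_slope (fun t : ℝ => f (x + t • (y - x)))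
    (fun t => ⟪f' (x + t • (y - x)), y - x⟫) one_pos hcont
    (fun t _ => line_hasDerivAt hf x y t)
  have h0 := hmono (x + c • (y - x)) x
  have hpx : (x + c • (y - x)) - x = c • (y - x) := by abel
  rw [hpx, real_inner_smul_right] at h0
  have h1 : 0 ≤ ⟪f' (x + c • (y - x)) - f' x, y - x⟫ := by nlinarith [hc.1]
  rw [inner_sub_left] at h1
  simp only [zero_smul, add_zero, one_smul, sub_zero, div_one, add_sub_cancel] at hceq
  linarith [hceq, h1]

lemma hasGradientAt_const_mul_normSq (c : ℝ) (x : F) :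
    HasGradientAt (fun x : F => c * ‖x‖ ^ 2) ((2 * c) • x) x := by
  have h := (hasFDerivAt_id x).norm_sq.const_mul c
  have heq : (InnerProductSpace.toDual ℝ F) ((2 * c) • x)
      = c • 2 • ((innerSL ℝ) x).comp (ContinuousLinearMap.id ℝ F) := by
    ext v
    simp [real_inner_smul_left]
    ring
  rw [HasGradientAt, HasGradientAtFilter, heq]
  exact h

lemma HasGradientAt.sub'' {f₁ f₂ : F → ℝ} {v₁ v₂ : F} {x : F}
    (h₁ : HasGradientAt f₁ v₁ x) (h₂ : HasGradientAt f₂ v₂ x) :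
    HasGradientAt (fun y => f₁ y - f₂ y) (v₁ - v₂) x := by
  rw [HasGradientAt, HasGradientAtFilter] at *
  have h := h₁.sub h₂
  rw [← map_sub] at h
  exact h

lemma cocoercive_abstract {f : F → ℝ} {f' : F → F} {K : ℝ} (hK : 0 < K)
    (hf : ∀ x, HasGradientAt f (f' x) x)
    (hconv : ConvexOn ℝ Set.univ f)
    (hupper : ∀ x y, f y ≤ f x + ⟪f' x, y - x⟫ + K / 2 * ‖y - x‖ ^ 2) (a b : F) :
    1 / (2 * K) * ‖f' a - f' b‖ ^ 2 ≤ f a - f b - ⟪f' b, a - b⟫ := by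
  obtain ⟨v, hv⟩ : ∃ v, v = f' a - f' b := ⟨_, rfl⟩
  obtain ⟨c, hc⟩ : ∃ c, c = a - K⁻¹ • v := ⟨_, rfl⟩
  have h1 := convex_first_order hf hconv b c
  have h2 := hupper a c
  have hca : c - a = -(K⁻¹ • v) := by rw [hc]; abel
  have hcb : c - b = (a - b) - K⁻¹ • v := by rw [hc]; abel
  have hKnorm : ‖(K : ℝ)⁻¹‖ = K⁻¹ := by
    rw [Real.norm_eq_abs, abs_of_pos (inv_pos.mpr hK)]
  have e1 : ⟪f' b, c - b⟫ = ⟪f' b, a - b⟫ - K⁻¹ * ⟪f' b, v⟫ := by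
    rw [hcb, inner_sub_right, real_inner_smul_right]
  have e2 : ⟪f' a, c - a⟫ = -(K⁻¹ * ⟪f' a, v⟫) := by
    rw [hca, inner_neg_right, real_inner_smul_right]
  have e3 : ‖c - a‖ ^ 2 = K⁻¹ ^ 2 * ‖v‖ ^ 2 := by
    rw [hca, norm_neg, norm_smul, hKnorm, mul_pow]
  rw [e1] at h1
  rw [e2, e3] at h2
  have hvv : ⟪f' a, v⟫ - ⟪f' b, v⟫ = ‖v‖ ^ 2 := by
    rw [← inner_sub_left, ← hv, hv, real_inner_self_eq_norm_sq]
  have hvv2 : K⁻¹ * ⟪f' a, v⟫ - K⁻¹ * ⟪f' b, v⟫ = K⁻¹ * ‖v‖ ^ 2 := by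
    rw [← mul_sub, hvv]
  have hK' : (K : ℝ) ≠ 0 := ne_of_gt hK
  have hhalf : K / 2 * (K⁻¹ ^ 2 * ‖v‖ ^ 2) = 1 / (2 * K) * ‖v‖ ^ 2 := by
    field_simp
  have hfin : K⁻¹ * ‖v‖ ^ 2 - 1 / (2 * K) * ‖v‖ ^ 2 = 1 / (2 * K) * ‖v‖ ^ 2 := by
    field_simp
    ring
  rw [hv] at hvv2 hhalf hfin h1 h2
  linarith [h1, h2, hvv2, hhalf, hfin]

end Aux

/-- Co-coercivity for 1-smooth, μ-strongly convex functions. -/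
theorem cocoercivity (d : ℕ) (μ : ℝ) (hμ0 : 0 ≤ μ) (hμ1 : μ < 1)
    (g : EuclideanSpace ℝ (Fin d) → ℝ) (g' : EuclideanSpace ℝ (Fin d) → EuclideanSpace ℝ (Fin d))
    (hgrad : ∀ x, HasGradientAt g (g' x) x)
    (hsmooth : ∀ a b, ‖g' a - g' b‖ ≤ ‖a - b‖)
    (hconv : ConvexOn ℝ Set.univ (fun x => g x - μ / 2 * ‖x‖ ^ 2)) :
    ∀ a b, 0 ≤ g a - g b - ⟪g' b, a - b⟫ - μ / 2 * ‖a - b‖ ^ 2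
      - 1 / (2 * (1 - μ)) * ‖g' a - g' b - μ • (a - b)‖ ^ 2 := by
  intro a b
  have hK : 0 < 1 - μ := by linarith
  have hgradh : ∀ x, HasGradientAt (fun x => g x - μ / 2 * ‖x‖ ^ 2) (g' x - μ • x) x := by
    intro x
    have := (hgrad x).sub'' (hasGradientAt_const_mul_normSq (μ / 2) x)
    simpa [show (2 * (μ / 2)) = μ by ring] using this
  have hgradq : ∀ x, HasGradientAt (fun x => (1:ℝ)/2 * ‖x‖ ^ 2 - g x) (x - g' x) x := by
    intro x
    have := (hasGradientAt_const_mul_normSq ((1:ℝ)/2) x).sub'' (hgrad x)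
    simpa using this
  have hmono : ∀ x y, 0 ≤ ⟪(x - g' x) - (y - g' y), x - y⟫ := by
    intro x y
    have h1 : ⟪g' x - g' y, x - y⟫ ≤ ‖g' x - g' y‖ * ‖x - y‖ := real_inner_le_norm _ _
    have h2 := hsmooth x y
    have h3 : (x - g' x) - (y - g' y) = (x - y) - (g' x - g' y) := by abel
    rw [h3, inner_sub_left, real_inner_self_eq_norm_sq]
    nlinarith [norm_nonneg (x - y), norm_nonneg (g' x - g' y)]
  have hupper : ∀ x y, g y - μ / 2 * ‖y‖ ^ 2 ≤ (g x - μ / 2 * ‖x‖ ^ 2)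
      + ⟪g' x - μ • x, y - x⟫ + (1 - μ) / 2 * ‖y - x‖ ^ 2 := by
    intro x y
    have hmf := mono_first_order hgradq hmono x y
    have ea : ⟪x - g' x, y - x⟫ = ⟪x, y - x⟫ - ⟪g' x, y - x⟫ := by rw [inner_sub_left]
    have eb : ⟪x, y - x⟫ = ⟪x, y⟫ - ‖x‖ ^ 2 := by
      rw [inner_sub_right, real_inner_self_eq_norm_sq]
    have ec : ⟪g' x - μ • x, y - x⟫ = ⟪g' x, y - x⟫ - μ * ⟪x, y - x⟫ := by
      rw [inner_sub_left, real_inner_smul_left]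
    have hns : ‖y - x‖ ^ 2 = ‖y‖ ^ 2 - 2 * ⟪x, y⟫ + ‖x‖ ^ 2 := by
      rw [norm_sub_sq_real, real_inner_comm]
    rw [ea, eb] at hmf
    rw [ec, eb, hns]
    nlinarith [hmf]
  have key := cocoercive_abstract hK hgradh hconv hupper a b
  have hvv : (g' a - μ • a) - (g' b - μ • b) = g' a - g' b - μ • (a - b) := by
    rw [smul_sub]; abel
  rw [hvv] at key
  have hlhs : ⟪g' b - μ • b, a - b⟫ = ⟪g' b, a - b⟫ + μ / 2 * ‖a - b‖ ^ 2
      - μ / 2 * ‖a‖ ^ 2 + μ / 2 * ‖b‖ ^ 2 := by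
    rw [inner_sub_left, real_inner_smul_left]
    have hns : ‖a - b‖ ^ 2 = ‖a‖ ^ 2 - 2 * ⟪a, b⟫ + ‖b‖ ^ 2 := by
      rw [norm_sub_sq_real]
    have hba : ⟪b, a - b⟫ = ⟪a, b⟫ - ‖b‖ ^ 2 := by
      rw [inner_sub_right, real_inner_self_eq_norm_sq, real_inner_comm]
    rw [hns, hba]
    ring
  rw [hlhs] at key
  linarith [key]
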